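/- Let A be an irreducible nonnegative N×N matrix, D a positive diagonal matrix, and β̄ > 0. The Metzler matrix -D + β̄ A has its largest real-part eigenvalue negative if and only if β̄ ρ(A D⁻¹) < 1, and equal to zero if and only if β̄ ρ(A D⁻¹) = 1, where ρ denotes spectral radius. -/

import Mathlib

open Set

/-- The largest real part among the (complex) eigenvalues of a real square matrix. -/
noncomputable def specRealBound {N : ℕ} (M : Matrix (Fin N) (Fin N) ℝ) : ℝ :=
  sSup (Complex.re '' spectrum ℂ (M.map (Complex.ofReal : ℝ → ℂ)))

/-- The spectral radius of a real square matrix. -/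
noncomputable def specRadius {N : ℕ} (M : Matrix (Fin N) (Fin N) ℝ) : ℝ :=
  sSup ((fun z : ℂ => ‖z‖) '' spectrum ℂ (M.map (Complex.ofReal : ℝ → ℂ)))

/-- An entrywise-nonnegative matrix is irreducible if every pair of indices is
connected by a positive-weight path. -/
def MatIrreducible {N : ℕ} (M : Matrix (Fin N) (Fin N) ℝ) : Prop :=
  ∀ i j, ∃ n : ℕ, 0 < n ∧ 0 < (M ^ n) i j

open Matrix Filter Topology
open scoped ENNReal NNReal

attribute [local instance] Matrix.linftyOpNormedRing Matrix.linftyOpNormedAlgebra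

noncomputable abbrev cmx (M : Matrix (Fin N) (Fin N) ℝ) : Matrix (Fin N) (Fin N) ℂ :=
  M.map (Complex.ofReal : ℝ → ℂ)

lemma spec_nonempty (hN : 0 < N) (M : Matrix (Fin N) (Fin N) ℝ) :
    (spectrum ℂ (cmx M)).Nonempty := by
  haveI : Nonempty (Fin N) := ⟨⟨0, hN⟩⟩
  haveI : CompleteSpace (Matrix (Fin N) (Fin N) ℂ) := FiniteDimensional.complete ℂ _
  exact spectrum.nonempty _

lemma exists_eigenvector {M : Matrix (Fin N) (Fin N) ℂ} {μ : ℂ}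
    (h : μ ∈ spectrum ℂ M) : ∃ v : Fin N → ℂ, v ≠ 0 ∧ M *ᵥ v = μ • v := by
  rw [spectrum.mem_iff] at h
  have hdet : (algebraMap ℂ (Matrix (Fin N) (Fin N) ℂ) μ - M).det = 0 := by
    by_contra hd
    exact h ((Matrix.isUnit_iff_isUnit_det _).mpr (isUnit_iff_ne_zero.mpr hd))
  obtain ⟨v, hv, hveq⟩ := (Matrix.exists_mulVec_eq_zero_iff).mpr hdet
  refine ⟨v, hv, ?_⟩
  have := hveq
  rw [Matrix.sub_mulVec] at this
  have halg : (algebraMap ℂ (Matrix (Fin N) (Fin N) ℂ) μ) *ᵥ v = μ • v := by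
    rw [Algebra.algebraMap_eq_smul_one, Matrix.smul_mulVec, Matrix.one_mulVec]
  rw [halg] at this
  exact (sub_eq_zero.mp this).symm

lemma specRealBound_isGreatest (hN : 0 < N) (M : Matrix (Fin N) (Fin N) ℝ) :
    IsGreatest (Complex.re '' spectrum ℂ (cmx M)) (specRealBound M) := by
  have hfin : (Complex.re '' spectrum ℂ (cmx M)).Finite :=
    (Matrix.finite_spectrum _).image _
  have hne : (Complex.re '' spectrum ℂ (cmx M)).Nonempty :=
    (spec_nonempty hN M).image _
  exact ⟨hne.csSup_mem hfin, fun x hx => le_csSup hfin.bddAbove hx⟩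

lemma specRadius_isGreatest (hN : 0 < N) (M : Matrix (Fin N) (Fin N) ℝ) :
    IsGreatest ((fun z : ℂ => ‖z‖) '' spectrum ℂ (cmx M)) (specRadius M) := by
  have hfin : ((fun z : ℂ => ‖z‖) '' spectrum ℂ (cmx M)).Finite :=
    (Matrix.finite_spectrum _).image _
  have hne : ((fun z : ℂ => ‖z‖) '' spectrum ℂ (cmx M)).Nonempty :=
    (spec_nonempty hN M).image _
  exact ⟨hne.csSup_mem hfin, fun x hx => le_csSup hfin.bddAbove hx⟩

lemma abs_mulVec_le {M : Matrix (Fin N) (Fin N) ℝ} (hM : ∀ i j, 0 ≤ M i j)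
    (v : Fin N → ℂ) (i : Fin N) :
    ‖(cmx M *ᵥ v) i‖ ≤ (M *ᵥ fun j => ‖v j‖) i := by
  simp only [Matrix.mulVec, dotProduct, Matrix.map_apply]
  refine (norm_sum_le _ _).trans ?_
  apply Finset.sum_le_sum
  intro j _
  rw [norm_mul, Complex.norm_real, Real.norm_eq_abs, abs_of_nonneg (hM i j)]

lemma pow_entries_nonneg {M : Matrix (Fin N) (Fin N) ℝ} (hM : ∀ i j, 0 ≤ M i j) :
    ∀ n, ∀ i j, 0 ≤ (M ^ n) i j := by
  intro n
  induction n with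
  | zero => intro i j; simp [Matrix.one_apply]; positivity
  | succ n ih =>
    intro i j
    rw [pow_succ, Matrix.mul_apply]
    exact Finset.sum_nonneg fun k _ => mul_nonneg (ih i k) (hM k j)

lemma mulVec_mono {M : Matrix (Fin N) (Fin N) ℝ} (hM : ∀ i j, 0 ≤ M i j)
    {u w : Fin N → ℝ} (h : ∀ i, u i ≤ w i) : ∀ i, (M *ᵥ u) i ≤ (M *ᵥ w) i := by
  intro i
  simp only [Matrix.mulVec, dotProduct]
  exact Finset.sum_le_sum fun j _ => mul_le_mul_of_nonneg_left (h j) (hM i j)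

lemma cmx_mul (M P : Matrix (Fin N) (Fin N) ℝ) : cmx (M * P) = cmx M * cmx P := by
  ext i j
  simp only [cmx, Matrix.map_apply, Matrix.mul_apply]
  push_cast
  rfl

lemma cmx_pow (M : Matrix (Fin N) (Fin N) ℝ) : ∀ n, cmx (M ^ n) = (cmx M) ^ n := by
  intro n
  induction n with
  | zero =>
    ext i j
    simp [cmx, Matrix.one_apply, apply_ite]
  | succ n ih => rw [pow_succ, cmx_mul, ih, pow_succ]

lemma specRadius_nonneg (hN : 0 < N) (B : Matrix (Fin N) (Fin N) ℝ) :
    0 ≤ specRadius B := by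
  obtain ⟨z, _, hz⟩ := (specRadius_isGreatest hN B).1
  rw [← hz]
  positivity

lemma spectralRadius_eq (hN : 0 < N) (B : Matrix (Fin N) (Fin N) ℝ) :
    spectralRadius ℂ (cmx B) = ENNReal.ofReal (specRadius B) := by
  obtain ⟨⟨z0, hz0mem, hz0g⟩, hub⟩ := specRadius_isGreatest hN B
  have hz0 : ‖z0‖ = specRadius B := hz0g
  have habs : ‖z0‖ = ‖z0‖ := rfl
  rw [← hz0, habs, spectralRadius, ← coe_nnnorm z0, ENNReal.ofReal_coe_nnreal]
  apply le_antisymm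
  · apply iSup₂_le
    intro k hk
    have : ‖k‖ ≤ ‖z0‖ := by
      rw [hz0]; exact hub ⟨k, hk, rfl⟩
    have h2 : ‖k‖₊ ≤ ‖z0‖₊ := by
      rw [← NNReal.coe_le_coe]
      simpa using this
    exact ENNReal.coe_le_coe.mpr h2
  · exact le_iSup₂ (f := fun k (_ : k ∈ spectrum ℂ (cmx B)) => (‖k‖₊ : ℝ≥0∞)) z0 hz0mem

lemma row_sum_le_norm (A : Matrix (Fin N) (Fin N) ℂ) (i : Fin N) :
    (∑ j, ‖A i j‖) ≤ ‖A‖ := by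
  rw [Matrix.linfty_opNorm_def]
  have h : (∑ j, ‖A i j‖₊) ≤ Finset.univ.sup fun i => ∑ j, ‖A i j‖₊ :=
    Finset.le_sup (f := fun i => ∑ j, ‖A i j‖₊) (Finset.mem_univ i)
  calc (∑ j, ‖A i j‖) = ((∑ j, ‖A i j‖₊ : ℝ≥0) : ℝ) := by push_cast; rfl
  _ ≤ _ := by exact_mod_cast h

lemma gelfand_lower (hN : 0 < N) (B : Matrix (Fin N) (Fin N) ℝ)
    (hB : ∀ i j, 0 ≤ B i j) (w : Fin N → ℝ) (hw0 : ∀ i, 0 ≤ w i) (hwne : w ≠ 0)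
    (lam : ℝ) (hlam : 0 ≤ lam) (h : ∀ i, lam * w i ≤ (B *ᵥ w) i) :
    lam ≤ specRadius B := by
  haveI : CompleteSpace (Matrix (Fin N) (Fin N) ℂ) := FiniteDimensional.complete ℂ _
  -- iterate the inequality
  have hpow : ∀ n, ∀ i, lam ^ n * w i ≤ ((B ^ n) *ᵥ w) i := by
    intro n
    induction n with
    | zero => intro i; simp [Matrix.one_mulVec]
    | succ n ih =>
      intro i
      have h1 : ∀ i, ((B ^ n) *ᵥ (lam • w)) i ≤ ((B ^ n) *ᵥ (B *ᵥ w)) i :=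
        mulVec_mono (pow_entries_nonneg hB n) (by intro i; simpa using h i)
      have h2 : ((B ^ n) *ᵥ (lam • w)) i = lam * ((B ^ n) *ᵥ w) i := by
        rw [Matrix.mulVec_smul]; rfl
      have h3 : ((B ^ n) *ᵥ (B *ᵥ w)) i = ((B ^ (n+1)) *ᵥ w) i := by
        rw [Matrix.mulVec_mulVec, ← pow_succ]
      calc lam ^ (n+1) * w i = lam * (lam ^ n * w i) := by ring
      _ ≤ lam * ((B ^ n) *ᵥ w) i := mul_le_mul_of_nonneg_left (ih i) hlam
      _ = ((B ^ n) *ᵥ (lam • w)) i := h2.symm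
      _ ≤ _ := by rw [← h3]; exact h1 i
  obtain ⟨i0, hi0⟩ := Function.ne_iff.mp hwne
  have hwi0 : 0 < w i0 := lt_of_le_of_ne (hw0 i0) (Ne.symm hi0)
  have hW : 0 < ‖w‖ := norm_pos_iff.mpr hwne
  have hwle : ∀ j, w j ≤ ‖w‖ := fun j => (le_abs_self _).trans (norm_le_pi_norm w j)
  set c : ℝ := w i0 / ‖w‖ with hc_def
  have hc : 0 < c := div_pos hwi0 hW
  -- norm bound on powers
  have hnorm : ∀ n : ℕ, lam ^ n * c ≤ ‖(cmx B) ^ n‖ := by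
    intro n
    rw [← cmx_pow]
    have hrow := row_sum_le_norm (cmx (B ^ n)) i0
    have hsum : (B ^ n *ᵥ w) i0 ≤ (∑ j, (B ^ n) i0 j) * ‖w‖ := by
      simp only [Matrix.mulVec, dotProduct, Finset.sum_mul]
      exact Finset.sum_le_sum fun j _ =>
        mul_le_mul_of_nonneg_left (hwle j) (pow_entries_nonneg hB n i0 j)
    have heq : (∑ j, ‖(cmx (B ^ n)) i0 j‖) = ∑ j, (B ^ n) i0 j := by
      apply Finset.sum_congr rfl
      intro j _
      simp only [cmx, Matrix.map_apply, Complex.norm_real]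
      exact abs_of_nonneg (pow_entries_nonneg hB n i0 j)
    have hkey : lam ^ n * w i0 ≤ (∑ j, (B ^ n) i0 j) * ‖w‖ := (hpow n i0).trans hsum
    rw [hc_def, ← mul_div_assoc, div_le_iff₀ hW]
    nlinarith [hrow, heq, hkey]
  -- Gelfand
  have hgel := spectrum.pow_norm_pow_one_div_tendsto_nhds_spectralRadius (cmx B)
  have hcone : Filter.Tendsto (fun n : ℕ => c ^ (1 / (n:ℝ) : ℝ)) atTop (nhds 1) := by
    have h0 : Filter.Tendsto (fun n : ℕ => 1 / (n:ℝ)) atTop (nhds 0) :=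
      tendsto_one_div_atTop_nhds_zero_nat
    have : Filter.Tendsto (fun n : ℕ => Real.exp (Real.log c * (1 / (n:ℝ)))) atTop
        (nhds (Real.exp 0)) := by
      apply (Real.continuous_exp.tendsto 0).comp
      simpa using h0.const_mul (Real.log c)
    rw [Real.exp_zero] at this
    refine this.congr fun n => ?_
    rw [Real.rpow_def_of_pos hc]
  have hflim : Filter.Tendsto (fun n : ℕ => ENNReal.ofReal (lam * c ^ (1 / (n:ℝ) : ℝ)))
      atTop (nhds (ENNReal.ofReal lam)) := by
    have : Filter.Tendsto (fun n : ℕ => lam * c ^ (1 / (n:ℝ) : ℝ)) atTop (nhds (lam * 1)) :=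
      tendsto_const_nhds.mul hcone
    rw [mul_one] at this
    exact (ENNReal.continuous_ofReal.tendsto lam).comp this
  have hle : ∀ᶠ n : ℕ in atTop, ENNReal.ofReal (lam * c ^ (1 / (n:ℝ) : ℝ)) ≤
      ENNReal.ofReal (‖(cmx B) ^ n‖ ^ (1 / (n:ℝ) : ℝ)) := by
    filter_upwards [Filter.eventually_ge_atTop 1] with n hn
    apply ENNReal.ofReal_le_ofReal
    have hn0 : (n:ℝ) ≠ 0 := Nat.cast_ne_zero.mpr (by omega)
    have key : (lam ^ n * c) ^ (1 / (n:ℝ) : ℝ) ≤ ‖(cmx B) ^ n‖ ^ (1 / (n:ℝ) : ℝ) :=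
      Real.rpow_le_rpow (by positivity) (hnorm n) (by positivity)
    calc lam * c ^ (1 / (n:ℝ) : ℝ) = (lam ^ n * c) ^ (1 / (n:ℝ) : ℝ) := by
          rw [Real.mul_rpow (by positivity) hc.le, ← Real.rpow_natCast lam n,
            ← Real.rpow_mul hlam]
          rw [mul_one_div_cancel hn0, Real.rpow_one]
    _ ≤ _ := key
  have hmain : ENNReal.ofReal lam ≤ spectralRadius ℂ (cmx B) :=
    le_of_tendsto_of_tendsto hflim hgel hle
  rw [spectralRadius_eq hN B] at hmain
  exact (ENNReal.ofReal_le_ofReal_iff (specRadius_nonneg hN B)).mp hmain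

lemma metzler_lower (hN : 0 < N) (M : Matrix (Fin N) (Fin N) ℝ)
    (hM : ∀ i j, i ≠ j → 0 ≤ M i j) (x : Fin N → ℝ) (hx0 : ∀ i, 0 ≤ x i)
    (hxne : x ≠ 0) (ε : ℝ) (h : ∀ i, ε * x i ≤ (M *ᵥ x) i) :
    ε ≤ specRealBound M := by
  classical
  set c1 : ℝ := 1 + |ε| + ∑ i, |M i i| with hc1_def
  have hc1diag : ∀ i, -M i i < c1 := by
    intro i
    have h1 : |M i i| ≤ ∑ j, |M j j| :=
      Finset.single_le_sum (f := fun j => |M j j|) (fun j _ => abs_nonneg _) (Finset.mem_univ i)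
    have h2 : -M i i ≤ |M i i| := neg_le_abs _
    have h3 : 0 ≤ |ε| := abs_nonneg _
    rw [hc1_def]; linarith
  have hc1eps : -ε < c1 := by
    have : -ε ≤ |ε| := neg_le_abs _
    have h1 : (0:ℝ) ≤ ∑ i, |M i i| := Finset.sum_nonneg fun i _ => abs_nonneg _
    rw [hc1_def]; linarith
  -- for each n, find an eigenvalue with |μ + c1 + n| ≥ ε + c1 + n
  have key : ∀ n : ℕ, ∃ μ ∈ spectrum ℂ (cmx M),
      ε + (c1 + n) ≤ ‖μ + (c1 + n)‖ := by
    intro n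
    set c : ℝ := c1 + n with hc_def
    have hc1c : c1 ≤ c := by rw [hc_def]; exact le_add_of_nonneg_right (Nat.cast_nonneg n)
    set P : Matrix (Fin N) (Fin N) ℝ := M + c • (1 : Matrix (Fin N) (Fin N) ℝ) with hP_def
    have hP : ∀ i j, 0 ≤ P i j := by
      intro i j
      rw [hP_def]
      by_cases hij : i = j
      · subst hij
        simp only [Matrix.add_apply, Matrix.smul_apply, Matrix.one_apply_eq, smul_eq_mul, mul_one]
        linarith [hc1diag i]
      · simp only [Matrix.add_apply, Matrix.smul_apply, Matrix.one_apply_ne hij,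
          smul_eq_mul, mul_zero, add_zero]
        exact hM i j hij
    have hPv : ∀ i, (ε + c) * x i ≤ (P *ᵥ x) i := by
      intro i
      rw [hP_def, Matrix.add_mulVec, Matrix.smul_mulVec, Matrix.one_mulVec]
      have := h i
      simp only [Pi.add_apply, Pi.smul_apply, smul_eq_mul]
      nlinarith [hx0 i, this]
    have hlow : ε + c ≤ specRadius P :=
      gelfand_lower hN P hP x hx0 hxne (ε + c) (by linarith [hc1eps, hc1c]) hPv
    -- spectrum of P is spectrum of M shifted by c
    have hspec : spectrum ℂ (cmx P) = (fun μ => μ + (c:ℂ)) '' spectrum ℂ (cmx M) := by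
      have hPc : cmx P = cmx M + algebraMap ℂ (Matrix (Fin N) (Fin N) ℂ) (c:ℂ) := by
        ext i j
        rw [Algebra.algebraMap_eq_smul_one]
        by_cases hij : i = j
        · subst hij
          simp only [hP_def, cmx, Matrix.map_apply, Matrix.add_apply, Matrix.smul_apply,
            Matrix.one_apply_eq, smul_eq_mul, mul_one]
          push_cast
          ring
        · simp only [hP_def, cmx, Matrix.map_apply, Matrix.add_apply, Matrix.smul_apply,
            Matrix.one_apply_ne hij, smul_eq_mul, mul_zero, add_zero]
      rw [hPc, ← spectrum.add_singleton_eq]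
      ext z
      simp [Set.add_singleton]
    obtain ⟨⟨z0, hz0mem, hz0g⟩, _⟩ := specRadius_isGreatest hN P
    have hz0 : ‖z0‖ = specRadius P := hz0g
    rw [hspec] at hz0mem
    obtain ⟨μ, hμ, hμz⟩ := hz0mem
    have hμz' : μ + (c:ℂ) = z0 := hμz
    refine ⟨μ, hμ, ?_⟩
    have : ‖μ + (c:ℂ)‖ = specRadius P := by rw [hμz', hz0]
    rw [hc_def] at this ⊢
    push_cast at this ⊢
    rw [this]
    exact_mod_cast hlow
  -- pigeonhole: one eigenvalue works for infinitely many n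
  have hfin : (spectrum ℂ (cmx M)).Finite := Matrix.finite_spectrum _
  haveI : Finite (spectrum ℂ (cmx M)) := hfin.to_subtype
  choose g hg1 hg2 using key
  let g' : ℕ → spectrum ℂ (cmx M) := fun n => ⟨g n, hg1 n⟩
  obtain ⟨μ0, hμ0⟩ := Finite.exists_infinite_fiber g'
  have hinf : (g' ⁻¹' {μ0}).Infinite := Set.infinite_coe_iff.mp hμ0
  -- conclude Re μ0 ≥ ε
  have hre : ε ≤ (μ0 : ℂ).re := by
    by_contra hlt
    push_neg at hlt
    set a : ℝ := (μ0 : ℂ).re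
    set b : ℝ := (μ0 : ℂ).im
    obtain ⟨K, hK⟩ := exists_nat_gt ((a^2 + b^2 - ε^2) / (2 * (ε - a)) - c1)
    obtain ⟨n, hn, hnK⟩ := hinf.exists_gt K
    have hgn : g n = (μ0 : ℂ) := congrArg Subtype.val (Set.eq_of_mem_singleton (Set.mem_preimage.mp hn))
    have habs := hg2 n
    rw [hgn] at habs
    set cr : ℝ := c1 + (n:ℝ) with hcr_def
    have hcast : ((cr:ℝ):ℂ) = ((c1:ℝ):ℂ) + ((n:ℕ):ℂ) := by rw [hcr_def]; push_cast; ring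
    have habs' : ε + cr ≤ ‖(μ0:ℂ) + (cr:ℂ)‖ := by rw [hcast]; exact habs
    have hca : 0 < ε - a := by linarith
    have hcn : (a^2 + b^2 - ε^2) / (2 * (ε - a)) < cr := by
      have : (K:ℝ) < n := by exact_mod_cast hnK
      rw [hcr_def]; linarith
    have hc2 : a^2 + b^2 - ε^2 < cr * (2 * (ε - a)) := by
      rw [div_lt_iff₀ (by positivity)] at hcn
      linarith
    have hnn : 0 ≤ ε + cr := by
      have : (0:ℝ) ≤ (n:ℝ) := Nat.cast_nonneg n
      rw [hcr_def]; linarith [hc1eps]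
    have hsq : (ε + cr)^2 ≤ (a + cr) * (a + cr) + b * b := by
      have h2 := pow_le_pow_left₀ hnn habs' 2
      rwa [Complex.sq_norm, Complex.normSq_apply, Complex.add_re, Complex.add_im,
        Complex.ofReal_re, Complex.ofReal_im, add_zero] at h2
    nlinarith [hsq, hc2]
  have hmem : (μ0 : ℂ).re ∈ Complex.re '' spectrum ℂ (cmx M) := ⟨μ0, μ0.2, rfl⟩
  exact hre.trans ((specRealBound_isGreatest hN M).2 hmem)

lemma metzler_row (δ : Fin N → ℝ) (A : Matrix (Fin N) (Fin N) ℝ) (β : ℝ)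
    (v : Fin N → ℂ) (i : Fin N) :
    (cmx (-(Matrix.diagonal δ) + β • A) *ᵥ v) i
      = -((δ i : ℂ)) * v i + (β:ℂ) * ((cmx A *ᵥ v) i) := by
  have hM : cmx (-(Matrix.diagonal δ) + β • A)
      = -(Matrix.diagonal fun i => (δ i : ℂ)) + (β:ℂ) • cmx A := by
    ext i j
    by_cases hij : i = j
    · subst hij
      simp only [cmx, Matrix.map_apply, Matrix.add_apply, Matrix.neg_apply,
        Matrix.smul_apply, Matrix.diagonal_apply_eq, smul_eq_mul]
      push_cast
      ring
    · simp only [cmx, Matrix.map_apply, Matrix.add_apply, Matrix.neg_apply,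
        Matrix.smul_apply, Matrix.diagonal_apply_ne _ hij, smul_eq_mul]
      push_cast
      ring
  rw [hM, Matrix.add_mulVec, Matrix.neg_mulVec]
  simp only [Pi.add_apply, Pi.neg_apply, Matrix.smul_mulVec, Pi.smul_apply,
    Matrix.mulVec_diagonal, smul_eq_mul]
  ring

theorem metzler_threshold_aux
    (N : ℕ) (hN : 0 < N)
    (A : Matrix (Fin N) (Fin N) ℝ)
    (hA : ∀ i j, 0 ≤ A i j)
    (δ : Fin N → ℝ) (hδ : ∀ j, 0 < δ j)
    (β : ℝ) (hβ : 0 < β) :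
    (specRealBound (-(Matrix.diagonal δ) + β • A) < 0 ↔
        β * specRadius (A * (Matrix.diagonal δ)⁻¹) < 1) ∧
    (specRealBound (-(Matrix.diagonal δ) + β • A) = 0 ↔
        β * specRadius (A * (Matrix.diagonal δ)⁻¹) = 1) := by
  classical
  haveI : Nonempty (Fin N) := ⟨⟨0, hN⟩⟩
  set M : Matrix (Fin N) (Fin N) ℝ := -(Matrix.diagonal δ) + β • A with hM_def
  set C : Matrix (Fin N) (Fin N) ℝ := A * (Matrix.diagonal δ)⁻¹ with hC_def
  have hDinv : (Matrix.diagonal δ)⁻¹ = Matrix.diagonal (fun i => (δ i)⁻¹) := by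
    apply Matrix.inv_eq_right_inv
    rw [Matrix.diagonal_mul_diagonal]
    have h1 : (fun i => δ i * (δ i)⁻¹) = fun _ => (1:ℝ) :=
      funext fun i => mul_inv_cancel₀ (hδ i).ne'
    rw [h1, Matrix.diagonal_one]
  have hC : ∀ i j, C i j = A i j * (δ j)⁻¹ := by
    intro i j
    rw [hC_def, hDinv, Matrix.mul_diagonal]
  have hC0 : ∀ i j, 0 ≤ C i j := fun i j =>
    (hC i j) ▸ mul_nonneg (hA i j) (inv_nonneg.mpr (hδ j).le)
  set dmax : ℝ := ∑ i, δ i with hdmax_def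
  have hdmax : ∀ i, δ i ≤ dmax := fun i =>
    Finset.single_le_sum (f := δ) (fun j _ => (hδ j).le) (Finset.mem_univ i)
  have hdmaxpos : 0 < dmax := Finset.sum_pos (fun i _ => hδ i) Finset.univ_nonempty
  set dmin : ℝ := Finset.univ.inf' Finset.univ_nonempty δ with hdmin_def
  have hdmin : ∀ i, dmin ≤ δ i := fun i => Finset.inf'_le δ (Finset.mem_univ i)
  have hdminpos : 0 < dmin := by
    obtain ⟨i, _, hi⟩ := Finset.exists_mem_eq_inf' Finset.univ_nonempty δ
    rw [hdmin_def, hi]; exact hδ i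
  have hMoff : ∀ i j, i ≠ j → 0 ≤ M i j := by
    intro i j hij
    rw [hM_def]
    simp only [Matrix.add_apply, Matrix.neg_apply, Matrix.diagonal_apply_ne _ hij,
      Matrix.smul_apply, smul_eq_mul, neg_zero, zero_add]
    exact mul_nonneg hβ.le (hA i j)
  -- KEY 2 : eigenvalue of M with nonneg real part forces β ρ(C) large
  have key2 : ∀ μ ∈ spectrum ℂ (cmx M), 0 ≤ μ.re →
      1 + μ.re / dmax ≤ β * specRadius C := by
    intro μ hμ hre
    obtain ⟨v, hv, hveq⟩ := exists_eigenvector hμ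
    set u : Fin N → ℝ := fun i => ‖v i‖ with hu_def
    have hu0 : ∀ i, 0 ≤ u i := fun i => norm_nonneg _
    have hAu : ∀ i, (μ.re + δ i) * u i ≤ β * (A *ᵥ u) i := by
      intro i
      have h0 : (cmx M *ᵥ v) i = μ * v i := by
        rw [hveq]; simp
      have h1 : (β:ℂ) * ((cmx A *ᵥ v) i) = (μ + δ i) * v i := by
        have := metzler_row δ A β v i
        rw [hM_def] at h0
        rw [h0] at this
        have h2 := this
        linear_combination -h2
      have h3 : ‖(μ + δ i) * v i‖ ≤ β * (A *ᵥ u) i := by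
        rw [← h1, norm_mul, Complex.norm_real, Real.norm_eq_abs, abs_of_pos hβ]
        exact mul_le_mul_of_nonneg_left (abs_mulVec_le hA v i) hβ.le
      refine le_trans ?_ h3
      rw [norm_mul]
      have h4 : μ.re + δ i ≤ ‖μ + δ i‖ := by
        have := Complex.re_le_norm (μ + δ i)
        simpa using this
      exact mul_le_mul_of_nonneg_right h4 (hu0 i)
    set w : Fin N → ℝ := fun i => δ i * u i with hw_def
    have hw0 : ∀ i, 0 ≤ w i := fun i => mul_nonneg (hδ i).le (hu0 i)
    have hwne : w ≠ 0 := by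
      obtain ⟨i, hi⟩ := Function.ne_iff.mp hv
      apply Function.ne_iff.mpr
      refine ⟨i, ?_⟩
      have : 0 < u i := by
        rw [hu_def]; exact norm_pos_iff.mpr (by simpa using hi)
      have : 0 < w i := mul_pos (hδ i) this
      simp only [Pi.zero_apply]
      exact this.ne'
    have hCw : ∀ i, (C *ᵥ w) i = (A *ᵥ u) i := by
      intro i
      simp only [Matrix.mulVec, dotProduct]
      apply Finset.sum_congr rfl
      intro j _
      rw [hC i j, hw_def]
      have hδj := (hδ j).ne'
      field_simp
    set lam : ℝ := (1 + μ.re / dmax) / β with hlam_def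
    have hlamnn : 0 ≤ lam := by
      apply div_nonneg _ hβ.le
      have : 0 ≤ μ.re / dmax := div_nonneg hre hdmaxpos.le
      linarith
    have hlow : ∀ i, lam * w i ≤ (C *ᵥ w) i := by
      intro i
      rw [hCw i, hlam_def, hw_def]
      rw [div_mul_eq_mul_div, div_le_iff₀ hβ]
      have hstep : (1 + μ.re / dmax) * (δ i * u i) ≤ (μ.re + δ i) * u i := by
        have hfrac : δ i * (μ.re / dmax) ≤ μ.re := by
          rw [mul_comm, div_mul_eq_mul_div, div_le_iff₀ hdmaxpos]
          exact mul_le_mul_of_nonneg_left (hdmax i) hre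
        nlinarith [hu0 i, hδ i]
      calc (1 + μ.re / dmax) * (δ i * u i) ≤ (μ.re + δ i) * u i := hstep
      _ ≤ β * (A *ᵥ u) i := hAu i
      _ = (A *ᵥ u) i * β := mul_comm _ _
    have := gelfand_lower hN C hC0 w hw0 hwne lam hlamnn hlow
    rw [hlam_def, div_le_iff₀ hβ] at this
    linarith [this]
  -- KEY 1 : β ρ(C) ≥ 1 forces specRealBound M ≥ (β ρ(C) - 1) * dmin
  have key1 : 1 ≤ β * specRadius C →
      (β * specRadius C - 1) * dmin ≤ specRealBound M := by
    intro hr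
    obtain ⟨⟨z0, hz0mem, hz0g⟩, _⟩ := specRadius_isGreatest hN C
    have hz0 : ‖z0‖ = specRadius C := hz0g
    obtain ⟨v, hv, hveq⟩ := exists_eigenvector hz0mem
    set u : Fin N → ℝ := fun i => ‖v i‖ with hu_def
    have hu0 : ∀ i, 0 ≤ u i := fun i => norm_nonneg _
    set ρ : ℝ := specRadius C with hρ_def
    have hCu : ∀ i, ρ * u i ≤ (C *ᵥ u) i := by
      intro i
      have h0 : (cmx C *ᵥ v) i = z0 * v i := by rw [hveq]; simp
      have h1 : ‖(cmx C *ᵥ v) i‖ = ρ * u i := by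
        rw [h0, norm_mul, hz0]
      rw [← h1]
      exact abs_mulVec_le hC0 v i
    set x : Fin N → ℝ := fun i => (δ i)⁻¹ * u i with hx_def
    have hx0 : ∀ i, 0 ≤ x i := fun i => mul_nonneg (inv_nonneg.mpr (hδ i).le) (hu0 i)
    have hxne : x ≠ 0 := by
      obtain ⟨i, hi⟩ := Function.ne_iff.mp hv
      apply Function.ne_iff.mpr
      refine ⟨i, ?_⟩
      have hui : 0 < u i := norm_pos_iff.mpr (by simpa using hi)
      have : 0 < x i := mul_pos (inv_pos.mpr (hδ i)) hui
      simp only [Pi.zero_apply]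
      exact this.ne'
    have hAx : ∀ i, (A *ᵥ x) i = (C *ᵥ u) i := by
      intro i
      simp only [Matrix.mulVec, dotProduct]
      apply Finset.sum_congr rfl
      intro j _
      rw [hC i j, hx_def]
      have hδj := (hδ j).ne'
      field_simp
    have hux : ∀ i, u i = δ i * x i := by
      intro i
      rw [hx_def, ← mul_assoc, mul_inv_cancel₀ (hδ i).ne', one_mul]
    have hMx : ∀ i, ((β * ρ - 1) * dmin) * x i ≤ (M *ᵥ x) i := by
      intro i
      have hrow : (M *ᵥ x) i = -(δ i) * x i + β * (A *ᵥ x) i := by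
        rw [hM_def, Matrix.add_mulVec, Matrix.neg_mulVec]
        simp only [Pi.add_apply, Pi.neg_apply, Matrix.smul_mulVec, Pi.smul_apply,
          Matrix.mulVec_diagonal, smul_eq_mul]
        ring
      rw [hrow, hAx i]
      have h1 : β * (ρ * u i) ≤ β * (C *ᵥ u) i := mul_le_mul_of_nonneg_left (hCu i) hβ.le
      have h2 : u i = δ i * x i := hux i
      have h3 : dmin ≤ δ i := hdmin i
      have h4 : 0 ≤ β * ρ - 1 := by linarith
      have hu' : β * (ρ * u i) = (β * ρ) * (δ i * x i) := by rw [h2]; ring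
      have h7 : 0 ≤ (β * ρ - 1) * ((δ i - dmin) * x i) :=
        mul_nonneg h4 (mul_nonneg (by linarith) (hx0 i))
      nlinarith [h1, hu', h7]
    have := metzler_lower hN M hMoff x hx0 hxne ((β * ρ - 1) * dmin) hMx
    exact this
  -- attained sup of real parts
  obtain ⟨⟨μ0, hμ0mem, hμ0g⟩, hub⟩ := specRealBound_isGreatest hN M
  have hμ0 : μ0.re = specRealBound M := hμ0g
  set s : ℝ := specRealBound M with hs_def
  set r : ℝ := β * specRadius C with hr_def
  constructor
  · constructor
    · intro hs
      by_contra hr1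
      push_neg at hr1
      have h1 := key1 hr1
      have h2 : 0 ≤ (r - 1) * dmin := mul_nonneg (by linarith) hdminpos.le
      linarith
    · intro hr1
      by_contra hs
      push_neg at hs
      have := key2 μ0 hμ0mem (by rw [hμ0]; exact hs)
      rw [hμ0] at this
      have h2 : 0 ≤ s / dmax := div_nonneg hs hdmaxpos.le
      linarith
  · constructor
    · intro hs
      have h1 := key2 μ0 hμ0mem (by rw [hμ0, hs])
      rw [hμ0, hs] at h1
      simp only [zero_div, add_zero] at h1
      by_contra hne
      have hlt : 1 < r := lt_of_le_of_ne h1 (Ne.symm hne)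
      have h2 := key1 hlt.le
      have h3 : 0 < (r - 1) * dmin := mul_pos (by linarith) hdminpos
      linarith
    · intro hr1
      have h1 := key1 hr1.ge
      rw [hr1] at h1
      simp only [sub_self, zero_mul] at h1
      have h2 := key2 μ0 hμ0mem (by rw [hμ0]; exact h1)
      rw [hμ0, hr1] at h2
      have : s / dmax ≤ 0 := by linarith
      have hsle : s ≤ 0 := by
        by_contra hpos
        push_neg at hpos
        have : 0 < s / dmax := div_pos hpos hdmaxpos
        linarith
      linarith

/-- For irreducible nonnegative `A`, positive diagonal `D` and `β̄ > 0`,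
the Metzler matrix `-D + β̄ A` has negative (resp. zero) leading eigenvalue iff
`β̄ ρ(A D⁻¹) < 1` (resp. `= 1`). -/
theorem metzler_threshold
    (N : ℕ) (hN : 0 < N)
    (A : Matrix (Fin N) (Fin N) ℝ)
    (hA : ∀ i j, 0 ≤ A i j) (hirr : MatIrreducible A)
    (δ : Fin N → ℝ) (hδ : ∀ j, 0 < δ j)
    (β : ℝ) (hβ : 0 < β) :
    (specRealBound (-(Matrix.diagonal δ) + β • A) < 0 ↔
        β * specRadius (A * (Matrix.diagonal δ)⁻¹) < 1) ∧
    (specRealBound (-(Matrix.diagonal δ) + β • A) = 0 ↔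
        β * specRadius (A * (Matrix.diagonal δ)⁻¹) = 1) := by
  exact metzler_threshold_aux N hN A hA δ hδ β hβ
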